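/- For a set-indexed family of functions (f_i : X_i → Y_i)_{i∈I}, bas(⌈f_i⌉_{i∈I}) = sup{bas(f_i) : i ∈ I}, where ⌈f_i⌉ is the coproduct function on ∐X_i and bas denotes the least cardinality of a partition of the domain into sets of continuity. -/

import Mathlib

universe u

def coprodMap {I : Type*} {X Y : I → Type*} (f : ∀ i, X i → Y i) :
    (Σ i, X i) → Σ i, Y i :=
  fun p => ⟨p.1, f p.1 p.2⟩

def IsContPartition {X : Type*} {Y : Type*} [TopologicalSpace X] [TopologicalSpace Y]
    (f : X → Y) (p : Set (Set X)) : Prop :=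
  (∀ U ∈ p, ∀ V ∈ p, U ≠ V → Disjoint U V) ∧ ⋃₀ p = Set.univ ∧
    ∀ U ∈ p, Continuous fun x : U => f x.1

noncomputable def bas {X : Type u} {Y : Type*} [TopologicalSpace X] [TopologicalSpace Y]
    (f : X → Y) : Cardinal.{u} :=
  sInf {c | ∃ p : Set (Set X), IsContPartition f p ∧ Cardinal.mk ↥p = c}

/-- Every function admits a continuity partition (into singletons). -/
lemma exists_contPartition {X Y : Type*} [TopologicalSpace X] [TopologicalSpace Y]
    (f : X → Y) : ∃ p : Set (Set X), IsContPartition f p := by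
  refine ⟨Set.range (fun x : X => ({x} : Set X)), ?_, ?_, ?_⟩
  · rintro U ⟨x, rfl⟩ V ⟨y, rfl⟩ hUV
    have hxy : x ≠ y := fun h => hUV (by rw [h])
    simpa [Set.disjoint_singleton] using hxy
  · ext z
    simp only [Set.mem_sUnion, Set.mem_range, Set.mem_univ, iff_true]
    exact ⟨{z}, ⟨z, rfl⟩, rfl⟩
  · rintro U ⟨x, rfl⟩
    have : (fun z : ({x} : Set X) => f z.1) = fun _ => f x := by
      funext z
      have : z.1 = x := z.2
      rw [this]
    rw [this]
    exact continuous_const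

lemma bas_mem {X : Type u} {Y : Type*} [TopologicalSpace X] [TopologicalSpace Y]
    (f : X → Y) : ∃ p : Set (Set X), IsContPartition f p ∧ Cardinal.mk ↥p = bas f := by
  have h : {c | ∃ p : Set (Set X), IsContPartition f p ∧ Cardinal.mk ↥p = c}.Nonempty := by
    obtain ⟨p, hp⟩ := exists_contPartition f
    exact ⟨Cardinal.mk ↥p, p, hp, rfl⟩
  exact csInf_mem h

lemma bas_le {X : Type u} {Y : Type*} [TopologicalSpace X] [TopologicalSpace Y]
    {f : X → Y} {p : Set (Set X)} (hp : IsContPartition f p) : bas f ≤ Cardinal.mk ↥p :=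
  csInf_le' ⟨p, hp, rfl⟩

/-- If each slice restriction of `f` is continuous on a subset `U` of the coproduct,
then `coprodMap f` is continuous on `U`. -/
lemma cont_coprod_of_slices {I : Type u} {X Y : I → Type u} [∀ i, TopologicalSpace (X i)]
    [∀ i, TopologicalSpace (Y i)] (f : ∀ i, X i → Y i) (U : Set (Σ i, X i))
    (h : ∀ i, Continuous fun x : (Sigma.mk i ⁻¹' U) => f i x.1) :
    Continuous fun z : U => coprodMap f z.1 := by
  rw [continuous_def]
  intro W hW
  rw [isOpen_induced_iff]
  have h2 : ∀ i, ∃ O : Set (X i), IsOpen O ∧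
      (Subtype.val ⁻¹' O : Set (Sigma.mk i ⁻¹' U)) =
        (fun x : (Sigma.mk i ⁻¹' U) => f i x.1) ⁻¹' (Sigma.mk i ⁻¹' W) := by
    intro i
    have := (h i).isOpen_preimage _ (isOpen_sigma_iff.1 hW i)
    rwa [isOpen_induced_iff] at this
  choose O hO hOeq using h2
  refine ⟨{z : Σ i, X i | z.2 ∈ O z.1}, ?_, ?_⟩
  · rw [isOpen_sigma_iff]
    intro i
    exact hO i
  · ext ⟨⟨i, x⟩, hz⟩
    have key := Set.ext_iff.1 (hOeq i) ⟨x, hz⟩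
    simpa [coprodMap] using key

/-- bas(f i) ≤ bas(coprodMap f). -/
lemma bas_slice_le {I : Type u} {X Y : I → Type u} [∀ i, TopologicalSpace (X i)]
    [∀ i, TopologicalSpace (Y i)] (f : ∀ i, X i → Y i) (i : I) :
    bas (f i) ≤ bas (coprodMap f) := by
  obtain ⟨p, ⟨hdisj, hcov, hcont⟩, hmk⟩ := bas_mem (coprodMap f)
  set q : Set (Set (X i)) := (fun A => Sigma.mk i ⁻¹' A) '' p with hq
  have hpart : IsContPartition (f i) q := by
    refine ⟨?_, ?_, ?_⟩
    · rintro U ⟨A, hA, rfl⟩ V ⟨B, hB, rfl⟩ hUV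
      have hAB : A ≠ B := fun h => hUV (by rw [h])
      exact Set.disjoint_left.2 fun x hxA hxB =>
        Set.disjoint_left.1 (hdisj A hA B hB hAB) hxA hxB
    · ext x
      simp only [Set.mem_sUnion, Set.mem_univ, iff_true]
      have : (⟨i, x⟩ : Σ i, X i) ∈ ⋃₀ p := by rw [hcov]; trivial
      obtain ⟨A, hA, hxA⟩ := this
      exact ⟨Sigma.mk i ⁻¹' A, ⟨A, hA, rfl⟩, hxA⟩
    · rintro U ⟨A, hA, rfl⟩
      have hι : Continuous fun x : (Sigma.mk i ⁻¹' A) => (⟨⟨i, x.1⟩, x.2⟩ : A) :=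
        Continuous.subtype_mk (continuous_sigmaMk.comp continuous_subtype_val) _
      have hc := (hcont A hA).comp hι
      rw [Topology.IsEmbedding.sigmaMk.continuous_iff]
      exact hc
  calc bas (f i) ≤ Cardinal.mk ↥q := bas_le hpart
    _ ≤ Cardinal.mk ↥p := Cardinal.mk_image_le
    _ = bas (coprodMap f) := hmk

theorem stmt14 {I : Type u} {X Y : I → Type u}
    [∀ i, TopologicalSpace (X i)] [∀ i, TopologicalSpace (Y i)]
    (f : ∀ i, X i → Y i) :
    bas (coprodMap f) = ⨆ i, bas (f i) := by
  apply le_antisymm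
  · -- build a partition of the coproduct indexed by (⨆ i, bas (f i)).out
    set κ := ⨆ i, bas (f i) with hκ
    set J : Type u := κ.out with hJ
    have hmkJ : Cardinal.mk J = κ := Cardinal.mk_out κ
    -- for each i, a partition achieving bas (f i)
    have hp := fun i => bas_mem (f i)
    choose p hpart hmk using hp
    have hle : ∀ i, Cardinal.mk ↥(p i) ≤ Cardinal.mk J := by
      intro i
      rw [hmkJ, hmk i]
      exact le_ciSup (Cardinal.bddAbove_range _) i
    have he : ∀ i, Nonempty (↥(p i) ↪ J) := fun i => (Cardinal.le_def _ _).1 (hle i)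
    let e : ∀ i, ↥(p i) ↪ J := fun i => (he i).some
    let g : ∀ i, J → Set (X i) := fun i j => ⋃ (s : ↥(p i)) (_ : e i s = j), (s : Set (X i))
    have hmemg : ∀ i j x, x ∈ g i j ↔ ∃ s : ↥(p i), e i s = j ∧ x ∈ (s : Set (X i)) := by
      intro i j x
      simp [g, Set.mem_iUnion]
    let U : J → Set (Σ i, X i) := fun j => {z | z.2 ∈ g z.1 j}
    have hgeq : ∀ i (s : ↥(p i)), g i (e i s) = (s : Set (X i)) := by
      intro i s
      ext x
      rw [hmemg]
      constructor
      · rintro ⟨t, ht, hx⟩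
        rwa [(e i).injective ht] at hx
      · exact fun hx => ⟨s, rfl, hx⟩
    have hP : IsContPartition (coprodMap f) (Set.range U) := by
      refine ⟨?_, ?_, ?_⟩
      · rintro A ⟨a, rfl⟩ B ⟨b, rfl⟩ hAB
        have hab : a ≠ b := fun h => hAB (by rw [h])
        refine Set.disjoint_left.2 ?_
        rintro ⟨i, x⟩ hxa hxb
        obtain ⟨s, hs, hxs⟩ := (hmemg i a x).1 hxa
        obtain ⟨t, ht, hxt⟩ := (hmemg i b x).1 hxb
        have hst : (s : Set (X i)) ≠ (t : Set (X i)) := by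
          intro h
          exact hab (by rw [← hs, ← ht, Subtype.ext h])
        exact Set.disjoint_left.1 ((hpart i).1 s s.2 t t.2 hst) hxs hxt
      · ext ⟨i, x⟩
        simp only [Set.mem_sUnion, Set.mem_range, Set.mem_univ, iff_true]
        have : x ∈ ⋃₀ p i := by rw [(hpart i).2.1]; trivial
        obtain ⟨A, hA, hxA⟩ := this
        refine ⟨U (e i ⟨A, hA⟩), ⟨_, rfl⟩, ?_⟩
        show x ∈ g i (e i ⟨A, hA⟩)
        rw [hgeq]
        exact hxA
      · rintro A ⟨j, rfl⟩
        apply cont_coprod_of_slices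
        intro i
        by_cases hex : ∃ s : ↥(p i), e i s = j
        · obtain ⟨s, hs⟩ := hex
          have hUeq : Sigma.mk i ⁻¹' U j = (s : Set (X i)) := by
            ext x
            show x ∈ g i j ↔ _
            rw [← hs, hgeq]
          rw [hUeq]
          exact (hpart i).2.2 s s.2
        · have hUeq : Sigma.mk i ⁻¹' U j = ∅ := by
            ext x
            simp only [Set.mem_preimage, Set.mem_empty_iff_false, iff_false]
            intro hx
            obtain ⟨s, hs, _⟩ := (hmemg i j x).1 hx
            exact hex ⟨s, hs⟩
          rw [hUeq]
          exact continuous_iff_continuousAt.2 fun x => isEmptyElim x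
    calc bas (coprodMap f) ≤ Cardinal.mk ↥(Set.range U) := bas_le hP
      _ ≤ Cardinal.mk J := Cardinal.mk_range_le
      _ = κ := hmkJ
  · exact ciSup_le' (bas_slice_le f)
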